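/- Let n = 2p ≥ 2 be even and let M = {e_1, …, e_p} be a perfect matching of K_n (p pairwise non-adjacent edges covering all vertices). Then the strong defensive alliance number of K_n \ M equals p (there is a strong defensive alliance of cardinality p, namely a set containing exactly one endpoint of each matching edge, and none of cardinality less than p), whereas the strong defensive alliance number of K_n is p + 1; in particular a(K_n \ M; x) ≠ a(K_n; x). -/
import Mathlib


open SimpleGraph Polynomial Finset

/-- `δ_S(v)`: the number of neighbors of `v` lying in the set `S`. -/
noncomputable def degIn {V : Type*} (G : SimpleGraph V) (S : Finset V) (v : V) : ℕ :=
  ((S : Set V) ∩ G.neighborSet v).ncard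

/-- `δ(v)`: the degree of `v` in `G`. -/
noncomputable def degOf {V : Type*} (G : SimpleGraph V) (v : V) : ℕ :=
  (G.neighborSet v).ncard

/-- `S` is a strong defensive alliance in `G`: `S` is nonempty and every `v ∈ S`
satisfies `2·δ_S(v) ≥ δ(v)`. -/
def IsStrongAlliance {V : Type*} (G : SimpleGraph V) (S : Finset V) : Prop :=
  S.Nonempty ∧ ∀ v ∈ S, degOf G v ≤ 2 * degIn G S v

/-- The alliances counted by the strong alliance polynomial: strong defensive alliances
whose induced subgraph is connected. -/
def IsCountedAlliance {V : Type*} (G : SimpleGraph V) (S : Finset V) : Prop :=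
  IsStrongAlliance G S ∧ (G.induce (S : Set V)).Connected

/-- `a_k(G)`: the number of strong defensive alliances of cardinality `k` in `G`
whose induced subgraph is connected. -/
noncomputable def aCoeff {V : Type*} (G : SimpleGraph V) (k : ℕ) : ℕ :=
  {S : Finset V | S.card = k ∧ IsCountedAlliance G S}.ncard

/-- The strong alliance polynomial `a(G;x) = Σ_k a_k(G) x^k`. -/
noncomputable def alliancePoly {V : Type*} [Fintype V] (G : SimpleGraph V) : Polynomial ℤ :=
  ∑ k ∈ Finset.range (Fintype.card V + 1), Polynomial.C (aCoeff G k : ℤ) * Polynomial.X ^ k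

private lemma degIn_le_card_sub_one {V : Type*} (G : SimpleGraph V) (S : Finset V) {v : V}
    (hv : v ∈ S) : degIn G S v ≤ S.card - 1 := by
  classical
  have hsub : (↑S : Set V) ∩ G.neighborSet v ⊆ ↑(S.erase v) := by
    rintro w ⟨hwS, hwN⟩
    rw [Finset.mem_coe] at hwS
    rw [Finset.coe_erase]
    refine ⟨hwS, ?_⟩
    rintro rfl
    exact G.irrefl hwN
  calc degIn G S v ≤ (↑(S.erase v) : Set V).ncard :=
        Set.ncard_le_ncard hsub (Set.toFinite _)
    _ = (S.erase v).card := Set.ncard_coe_finset _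
    _ = S.card - 1 := Finset.card_erase_of_mem hv

private lemma connected_induce_of_adj {V : Type*} (G : SimpleGraph V) (S : Finset V)
    (hne : S.Nonempty) (h : ∀ a ∈ S, ∀ b ∈ S, a ≠ b → G.Adj a b) :
    (G.induce (↑S : Set V)).Connected := by
  rw [SimpleGraph.connected_iff]
  refine ⟨?_, (Finset.coe_nonempty.mpr hne).to_subtype⟩
  rintro ⟨a, ha⟩ ⟨b, hb⟩
  by_cases hab : a = b
  · subst hab
    exact SimpleGraph.Reachable.refl _
  · exact SimpleGraph.Adj.reachable
      (by simpa using h a (Finset.mem_coe.mp ha) b (Finset.mem_coe.mp hb) hab)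

private lemma alliancePoly_coeff {V : Type*} [Fintype V] (G : SimpleGraph V) {k : ℕ}
    (hk : k ≤ Fintype.card V) : (alliancePoly G).coeff k = (aCoeff G k : ℤ) := by
  unfold alliancePoly
  rw [Polynomial.finset_sum_coeff]
  simp only [Polynomial.coeff_C_mul, Polynomial.coeff_X_pow, mul_ite, mul_one, mul_zero]
  rw [Finset.sum_ite_eq (Finset.range (Fintype.card V + 1)) k
    (fun n => (aCoeff G n : ℤ))]
  simp [Nat.lt_succ_iff, hk]

theorem stmt_19 (p : ℕ) (hp : 1 ≤ p) (M : Finset (Sym2 (Fin (2 * p))))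
    (hM : ∀ e ∈ M, e ∈ (⊤ : SimpleGraph (Fin (2 * p))).edgeSet)
    (hmatch : ∀ e ∈ M, ∀ f ∈ M, e ≠ f → ∀ v : Fin (2 * p), v ∈ e → v ∉ f)
    (hcard : M.card = p)
    (hcover : ∀ v : Fin (2 * p), ∃ e ∈ M, v ∈ e) :
    (∀ S : Finset (Fin (2 * p)), (∀ e ∈ M, ∃! v : Fin (2 * p), v ∈ e ∧ v ∈ S) →
      S.card = p ∧ IsCountedAlliance ((⊤ : SimpleGraph (Fin (2 * p))).deleteEdges ↑M) S) ∧
    (∃ S : Finset (Fin (2 * p)), S.card = p ∧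
      IsCountedAlliance ((⊤ : SimpleGraph (Fin (2 * p))).deleteEdges ↑M) S) ∧
    (∀ S : Finset (Fin (2 * p)),
      IsCountedAlliance ((⊤ : SimpleGraph (Fin (2 * p))).deleteEdges ↑M) S → p ≤ S.card) ∧
    (∃ S : Finset (Fin (2 * p)), S.card = p + 1 ∧
      IsCountedAlliance (⊤ : SimpleGraph (Fin (2 * p))) S) ∧
    (∀ S : Finset (Fin (2 * p)),
      IsCountedAlliance (⊤ : SimpleGraph (Fin (2 * p))) S → p + 1 ≤ S.card) ∧
    alliancePoly ((⊤ : SimpleGraph (Fin (2 * p))).deleteEdges ↑M) ≠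
      alliancePoly (⊤ : SimpleGraph (Fin (2 * p))) := by
  classical
  set G' : SimpleGraph (Fin (2 * p)) := (⊤ : SimpleGraph (Fin (2 * p))).deleteEdges ↑M with hG'
  choose E hE1 hE2 using hcover
  set m : Fin (2 * p) → Fin (2 * p) := fun v => Sym2.Mem.other (hE2 v) with hm_def
  have hmm : ∀ v, s(v, m v) = E v := fun v => Sym2.other_spec (hE2 v)
  have hmne : ∀ v, m v ≠ v := by
    intro v h
    have h1 := hM (E v) (hE1 v)
    rw [← hmm v, SimpleGraph.mem_edgeSet, SimpleGraph.top_adj] at h1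
    exact h1 h.symm
  have hkey : ∀ v w : Fin (2 * p), s(v, w) ∈ M ↔ w = m v := by
    intro v w
    constructor
    · intro h
      have hv : v ∈ s(v, w) := Sym2.mem_mk_left v w
      have heq : s(v, w) = E v := by
        by_contra hne2
        exact hmatch _ h _ (hE1 v) hne2 v hv (hE2 v)
      rw [← hmm v] at heq
      exact Sym2.congr_right.mp heq
    · rintro rfl; rw [hmm v]; exact hE1 v
  have hadj : ∀ v w : Fin (2 * p), G'.Adj v w ↔ v ≠ w ∧ w ≠ m v := by
    intro v w
    rw [hG', SimpleGraph.deleteEdges_adj, SimpleGraph.top_adj, Finset.mem_coe, hkey]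
  have hnbhd : ∀ v : Fin (2 * p),
      G'.neighborSet v = ↑(Finset.univ \ {v, m v}) := by
    intro v
    ext w
    simp only [SimpleGraph.mem_neighborSet, hadj, Finset.coe_sdiff, Finset.coe_univ,
      Set.mem_diff, Set.mem_univ, true_and, Finset.coe_insert, Finset.coe_singleton,
      Set.mem_insert_iff, Set.mem_singleton_iff]
    constructor
    · rintro ⟨h1, h2⟩ (rfl | rfl) <;> simp_all
    · intro h
      exact ⟨fun hh => h (Or.inl hh.symm), fun hh => h (Or.inr hh)⟩
  have hcardpair : ∀ v : Fin (2 * p), ({v, m v} : Finset (Fin (2 * p))).card = 2 :=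
    fun v => Finset.card_pair (hmne v).symm
  have hdegOf' : ∀ v : Fin (2 * p), degOf G' v = 2 * p - 2 := by
    intro v
    rw [degOf, hnbhd v, Set.ncard_coe_finset,
      Finset.card_sdiff_of_subset (Finset.subset_univ _), hcardpair v, Finset.card_univ,
      Fintype.card_fin]
  have hnbhdT : ∀ v : Fin (2 * p),
      (⊤ : SimpleGraph (Fin (2 * p))).neighborSet v = ↑(Finset.univ \ {v}) := by
    intro v
    ext w
    simp [ne_comm]
  have hdegOfT : ∀ v : Fin (2 * p), degOf (⊤ : SimpleGraph (Fin (2 * p))) v = 2 * p - 1 := by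
    intro v
    rw [degOf, hnbhdT v, Set.ncard_coe_finset,
      Finset.card_sdiff_of_subset (Finset.subset_univ _), Finset.card_singleton, Finset.card_univ,
      Fintype.card_fin]
  -- Part 1: transversals are counted alliances of cardinality p
  have part1 : ∀ S : Finset (Fin (2 * p)), (∀ e ∈ M, ∃! v : Fin (2 * p), v ∈ e ∧ v ∈ S) →
      S.card = p ∧ IsCountedAlliance G' S := by
    intro S hS
    have hmS : ∀ v ∈ S, m v ∉ S := by
      intro v hv hmv
      obtain ⟨u, _, huniq⟩ := hS (E v) (hE1 v)
      have h1 := huniq v ⟨hE2 v, hv⟩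
      have h2 := huniq (m v) ⟨by rw [← hmm v]; exact Sym2.mem_mk_right v (m v), hmv⟩
      exact hmne v (h2.trans h1.symm)
    have hcardS : S.card = p := by
      have hb : M.card = S.card := by
        refine Finset.card_bij (fun e he => (hS e he).choose) ?_ ?_ ?_
        · exact fun e he => ((hS e he).choose_spec.1).2
        · intro e1 h1 e2 h2 heq
          by_contra hne
          have heq' : (hS e1 h1).choose = (hS e2 h2).choose := heq
          refine hmatch e1 h1 e2 h2 hne ((hS e1 h1).choose) ((hS e1 h1).choose_spec.1).1 ?_
          rw [heq']
          exact ((hS e2 h2).choose_spec.1).1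
        · intro v hv
          exact ⟨E v, hE1 v, ((hS (E v) (hE1 v)).choose_spec.2 v ⟨hE2 v, hv⟩).symm⟩
      omega
    have hSne : S.Nonempty := Finset.card_pos.mp (by omega)
    refine ⟨hcardS, ⟨hSne, ?_⟩, ?_⟩
    · intro v hv
      have hinter : (↑S : Set (Fin (2 * p))) ∩ G'.neighborSet v = ↑(S.erase v) := by
        rw [hnbhd v]
        ext w
        simp only [Finset.coe_sdiff, Finset.coe_univ, Set.mem_inter_iff, Finset.mem_coe,
          Set.mem_diff, Set.mem_univ, true_and, Finset.coe_insert, Finset.coe_singleton,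
          Set.mem_insert_iff, Set.mem_singleton_iff, Finset.mem_erase]
        constructor
        · rintro ⟨hwS, hw⟩
          exact ⟨fun hh => hw (Or.inl hh), hwS⟩
        · rintro ⟨hwv, hwS⟩
          refine ⟨hwS, ?_⟩
          rintro (rfl | rfl)
          · exact hwv rfl
          · exact hmS v hv hwS
      have hdi : degIn G' S v = p - 1 := by
        rw [degIn, hinter, Set.ncard_coe_finset, Finset.card_erase_of_mem hv, hcardS]
      rw [hdegOf' v, hdi]
      omega
    · refine connected_induce_of_adj G' S hSne ?_
      intro a ha b hb hab
      rw [hadj]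
      exact ⟨hab, fun h => hmS a ha (h ▸ hb)⟩
  -- Part 2: existence of a transversal
  have htrans : ∀ e ∈ M, ∃! v : Fin (2 * p), v ∈ e ∧ v ∈ M.image (fun e => e.out.1) := by
    intro e he
    refine ⟨e.out.1, ⟨Sym2.out_fst_mem e, Finset.mem_image_of_mem _ he⟩, ?_⟩
    rintro v ⟨hve, hvS⟩
    obtain ⟨f, hf, rfl⟩ := Finset.mem_image.mp hvS
    have hvf : f.out.1 ∈ f := Sym2.out_fst_mem f
    have : f = e := by
      by_contra hne
      exact hmatch f hf e he hne _ hvf hve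
    rw [this]
  have part2 : ∃ S : Finset (Fin (2 * p)), S.card = p ∧ IsCountedAlliance G' S :=
    ⟨M.image (fun e => e.out.1), part1 _ htrans⟩
  -- Part 3: lower bound for G'
  have part3 : ∀ S : Finset (Fin (2 * p)), IsCountedAlliance G' S → p ≤ S.card := by
    rintro S ⟨⟨hSne, hall⟩, _⟩
    obtain ⟨v, hv⟩ := hSne
    have h1 := hall v hv
    rw [hdegOf' v] at h1
    have h2 := degIn_le_card_sub_one G' S hv
    have h3 : 1 ≤ S.card := Finset.card_pos.mpr ⟨v, hv⟩
    omega
  -- Part 5: lower bound for ⊤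
  have part5 : ∀ S : Finset (Fin (2 * p)),
      IsCountedAlliance (⊤ : SimpleGraph (Fin (2 * p))) S → p + 1 ≤ S.card := by
    rintro S ⟨⟨hSne, hall⟩, _⟩
    obtain ⟨v, hv⟩ := hSne
    have h1 := hall v hv
    rw [hdegOfT v] at h1
    have h2 := degIn_le_card_sub_one (⊤ : SimpleGraph (Fin (2 * p))) S hv
    have h3 : 1 ≤ S.card := Finset.card_pos.mpr ⟨v, hv⟩
    omega
  -- Part 4: witness for ⊤ of cardinality p + 1
  have part4 : ∃ S : Finset (Fin (2 * p)), S.card = p + 1 ∧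
      IsCountedAlliance (⊤ : SimpleGraph (Fin (2 * p))) S := by
    obtain ⟨S, -, hScard⟩ := Finset.exists_subset_card_eq
      (s := (Finset.univ : Finset (Fin (2 * p)))) (n := p + 1)
      (by rw [Finset.card_univ, Fintype.card_fin]; omega)
    have hSne : S.Nonempty := Finset.card_pos.mp (by omega)
    refine ⟨S, hScard, ⟨hSne, ?_⟩, ?_⟩
    · intro v hv
      have hinter : (↑S : Set (Fin (2 * p))) ∩
          (⊤ : SimpleGraph (Fin (2 * p))).neighborSet v = ↑(S.erase v) := by
        rw [hnbhdT v]
        ext w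
        simp only [Finset.coe_sdiff, Finset.coe_univ, Set.mem_inter_iff, Finset.mem_coe,
          Set.mem_diff, Set.mem_univ, true_and, Finset.coe_singleton,
          Set.mem_singleton_iff, Finset.mem_erase]
        tauto
      have hdi : degIn (⊤ : SimpleGraph (Fin (2 * p))) S v = p := by
        rw [degIn, hinter, Set.ncard_coe_finset, Finset.card_erase_of_mem hv, hScard]
        omega
      rw [hdegOfT v, hdi]
      omega
    · exact connected_induce_of_adj _ S hSne (fun a _ b _ hab => by simpa using hab)
  -- Part 6: the polynomials differ
  have part6 : alliancePoly G' ≠ alliancePoly (⊤ : SimpleGraph (Fin (2 * p))) := by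
    intro heq
    have hk : p ≤ Fintype.card (Fin (2 * p)) := by rw [Fintype.card_fin]; omega
    have hcoeff := congrArg (fun q => Polynomial.coeff q p) heq
    simp only [alliancePoly_coeff _ hk] at hcoeff
    have h0 : aCoeff (⊤ : SimpleGraph (Fin (2 * p))) p = 0 := by
      have hempty : {S : Finset (Fin (2 * p)) | S.card = p ∧
          IsCountedAlliance (⊤ : SimpleGraph (Fin (2 * p))) S} = ∅ := by
        ext S
        simp only [Set.mem_setOf_eq, Set.mem_empty_iff_false, iff_false, not_and]
        intro hc hca
        have := part5 S hca
        omega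
      rw [aCoeff, hempty, Set.ncard_empty]
    have h1 : 0 < aCoeff G' p := by
      rw [aCoeff, Set.ncard_pos (Set.toFinite _)]
      obtain ⟨S, hc, hca⟩ := part2
      exact ⟨S, hc, hca⟩
    rw [h0] at hcoeff
    have : aCoeff G' p = 0 := by exact_mod_cast hcoeff
    omega
  exact ⟨part1, part2, part3, part4, part5, part6⟩
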